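/- Let w be an infinite non-ultimately periodic word, u ∈ Π_γ(w), h ≥ γ, φ ∈ Φ_h. If m1 ≤ m2 are positions of w not covered by any u-run, the number of u-runs contained in [m1,m2] is at most g, and m̄1, m̄2 are the images of m1, m2 under the position bijection rpo_{w,u,φ} to the reduced word, then PL(reduce_{w,u,φ}[m̄1, m̄2]) ≤ (g+1) · maxPL(w[m1, m2]). -/

import Mathlib

open scoped BigOperators

variable {α : Type*}

/-- The factor of the infinite word `w` (1-indexed) from position `i` to position `j`. -/
def Subword (w : ℕ → α) (i j : ℕ) : List α :=
  (List.range (j + 1 - i)).map fun n => w (i + n)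

/-- `t` is a finite factor of the infinite word `w` (positions are 1-indexed). -/
def IsFactorI (w : ℕ → α) (t : List α) : Prop :=
  ∃ i, 1 ≤ i ∧ t = (List.range t.length).map fun n => w (i + n)

/-- `t` occurs infinitely often in the infinite word `w`. -/
def RecurrentI (w : ℕ → α) (t : List α) : Prop :=
  ∀ N, ∃ i, N ≤ i ∧ t = (List.range t.length).map fun n => w (i + n)

/-- The infinite word `w` is ultimately periodic. -/
def UltimatelyPeriodic (w : ℕ → α) : Prop :=
  ∃ p N, 1 ≤ p ∧ ∀ n, N ≤ n → w (n + p) = w n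

/-- The `q`-power `u^q` of a finite word `u`, for a rational exponent `q ≥ 1`:
`u^⌊q⌋` followed by the prefix of `u` of length `(q - ⌊q⌋)·|u|`. -/
def fracPow (u : List α) (q : ℚ) : List α :=
  (List.replicate ⌊q⌋.toNat u).flatten ++
    u.take (⌊q * (u.length : ℚ)⌋.toNat - ⌊q⌋.toNat * u.length)

/-- A nonempty word is primitive if it is not a (possibly fractional) `q`-power,
`q ≥ 2`, of any word. -/
def Primitive (v : List α) : Prop :=
  v ≠ [] ∧ ∀ (t : List α) (q : ℚ), 2 ≤ q → v ≠ fracPow t q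

/-- `PowFactor u`: finite factors of `u^∞` together with finite factors of `(u^R)^∞`. -/
def IsPowFactor (u t : List α) : Prop :=
  (∃ k, t <:+: (List.replicate k u).flatten) ∨ (∃ k, t <:+: (List.replicate k u.reverse).flatten)

/-- `(i,j)` is a `u`-run of the infinite word `w` (with the fixed parameter `γ`). -/
def IsRun (γ : ℕ) (w : ℕ → α) (u : List α) (i j : ℕ) : Prop :=
  i < j ∧ (γ - 2) * u.length ≤ j - i + 1 ∧ u.length + 1 < i ∧
  IsPowFactor u (Subword w (i - u.length) (j + u.length)) ∧
  ¬ IsPowFactor u (Subword w (i - u.length - 1) (j + u.length)) ∧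
  ¬ IsPowFactor u (Subword w (i - u.length) (j + u.length + 1))

/-- Membership in the set `Π_γ(w)`. -/
def InPi (γ : ℕ) (w : ℕ → α) (u : List α) : Prop :=
  Primitive u ∧ IsFactorI w u ∧
  ¬ IsPowFactor u ((List.range (γ * u.length)).map fun n => w (1 + n)) ∧
  ∃ v : List α, v.length = u.length ∧ IsPowFactor u v ∧
    RecurrentI w ((List.replicate γ v).flatten)

/-- Palindromic length: the minimal number of nonempty palindromes whose
concatenation equals `v`. -/
noncomputable def PL (v : List α) : ℕ :=
  sInf {k | ∃ ps : List (List α), ps.flatten = v ∧ ps.length = k ∧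
    ∀ p ∈ ps, p ≠ [] ∧ p.reverse = p}

/-- `maxPL v`: the maximum of `PL` over the factors of `v`. -/
noncomputable def maxPL (v : List α) : ℕ :=
  sSup {n | ∃ t, t <:+: v ∧ n = PL t}

/-- `(I, J, W, Z, D)` is the run factorization `factrz(w,u)` of `w`:
`(I k, J k)` enumerates the `u`-runs in increasing order, `W k` is the inter-run
factor, and `w[I k, J k] = (Z k)^(D k)`. -/
structure IsFactrz (γ : ℕ) (w : ℕ → α) (u : List α)
    (I J : ℕ → ℕ) (W Z : ℕ → List α) (D : ℕ → ℚ) : Prop where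
  run : ∀ k, 1 ≤ k → IsRun γ w u (I k) (J k)
  mono : ∀ k, 1 ≤ k → I k < I (k + 1)
  complete : ∀ i j, IsRun γ w u i j → ∃ k, 1 ≤ k ∧ I k = i ∧ J k = j
  j0 : J 0 = 0
  wdef : ∀ k, 1 ≤ k → W k = Subword w (J (k - 1) + 1) (I k - 1)
  zlen : ∀ k, 1 ≤ k → (Z k).length = u.length
  zpow : ∀ k, 1 ≤ k → IsPowFactor u (Z k)
  dge : ∀ k, 1 ≤ k → 1 ≤ D k
  zd : ∀ k, 1 ≤ k → Subword w (I k) (J k) = fracPow (Z k) (D k)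

/-- Membership in `Φ_h` (with fixed parameter `γ`). -/
def InPhi (γ h : ℕ) (φ : ℚ → ℚ) : Prop :=
  ∀ q : ℚ, 1 ≤ q → ((γ : ℚ) - 2 ≤ φ q ∧ φ q < (h : ℚ) ∧ ∃ n : ℕ, q - φ q = (n : ℚ))

/-- The finite prefix `W 1 (Z 1)^(E 1) ⋯ W k (Z k)^(E k)` of the reduced word. -/
def redPrefix (W Z : ℕ → List α) (E : ℕ → ℚ) : ℕ → List α
  | 0 => []
  | k + 1 => redPrefix W Z E k ++ W (k + 1) ++ fracPow (Z (k + 1)) (E (k + 1))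

/-- `x` is the reduced word `W 1 (Z 1)^(E 1) W 2 (Z 2)^(E 2) ⋯` (1-indexed). -/
def IsReduce (W Z : ℕ → List α) (E : ℕ → ℚ) (x : ℕ → α) : Prop :=
  ∀ k, redPrefix W Z E k = (List.range (redPrefix W Z E k).length).map fun n => x (1 + n)

/-- Position `i` of `w` is not covered by any `u`-run. -/
def RpoDom (γ : ℕ) (w : ℕ → α) (u : List α) (i : ℕ) : Prop :=
  1 ≤ i ∧ ∀ a b, IsRun γ w u a b → ¬ (a ≤ i ∧ i ≤ b)

/-- `κ(j) = Σ_{i ≤ j} (|W i| + |(Z i)^(D i)|)`, the end position of the `j`-th run. -/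
def kappa (W Z : ℕ → List α) (D : ℕ → ℚ) (j : ℕ) : ℕ :=
  ∑ i ∈ Finset.Icc 1 j, ((W i).length + (fracPow (Z i) (D i)).length)

/-- The graph of the position bijection `rpo`: position `i` of `w` (with exponent
sequence `D`) corresponds to position `ib` of the reduced word (exponents `E`). -/
def RpoRel (W Z : ℕ → List α) (D E : ℕ → ℚ) (i ib : ℕ) : Prop :=
  ∃ j, kappa W Z D j < i ∧ i ≤ kappa W Z D (j + 1) ∧
    ib = kappa W Z E j + (i - kappa W Z D j)

/-- There are at most `N` `u`-runs entirely contained in `[a,b]`. -/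
def RunCountLe (γ : ℕ) (w : ℕ → α) (u : List α) (a b N : ℕ) : Prop :=
  ∀ S : Finset (ℕ × ℕ), (∀ p ∈ S, IsRun γ w u p.1 p.2 ∧ a ≤ p.1 ∧ p.2 ≤ b) → S.card ≤ N

/-- `(i,j)` is a standard palindrome of `w` with respect to `u`. -/
def IsStdPal (γ : ℕ) (w : ℕ → α) (u : List α) (i j : ℕ) : Prop :=
  i ≤ j ∧ RpoDom γ w u i ∧ RpoDom γ w u j ∧
  (Subword w (i - 1) (j + 1)).reverse = Subword w (i - 1) (j + 1) ∧
  (∀ m, i - 1 ≤ m → m ≤ min (i + u.length - 1) j → RpoDom γ w u m) ∧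
  (∀ m, max (j + 1 - u.length) i ≤ m → m ≤ j + 1 → RpoDom γ w u m) ∧
  (∀ m, i ≤ m → m ≤ j → (RpoDom γ w u m ↔ RpoDom γ w u (i + j - m)))

/-- `(m1,m2)` is a centered standard palindrome of `w[i,j]`. -/
def IsCnStdPal (γ : ℕ) (w : ℕ → α) (u : List α) (i j m1 m2 : ℕ) : Prop :=
  IsStdPal γ w u m1 m2 ∧ i ≤ m1 ∧ m2 ≤ j ∧ m1 - i = j - m2

section Lemmas
variable {α : Type*}

@[simp] lemma subword_length (w : ℕ → α) (a b : ℕ) :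
    (Subword w a b).length = b + 1 - a := by simp [Subword]

lemma subword_getElem (w : ℕ → α) (a b n : ℕ) (h : n < (Subword w a b).length) :
    (Subword w a b)[n] = w (a + n) := by simp [Subword]

lemma subword_append (w : ℕ → α) {a b c : ℕ} (h1 : a ≤ b + 1) (h2 : b ≤ c) :
    Subword w a c = Subword w a b ++ Subword w (b+1) c := by
  apply List.ext_getElem
  · simp; omega
  · intro n h h'
    rcases lt_or_ge n (b + 1 - a) with hn | hn
    · rw [List.getElem_append_left (by simpa using hn)]
      rw [subword_getElem, subword_getElem]
    · rw [List.getElem_append_right (by simpa using hn)]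
      rw [subword_getElem, subword_getElem]
      congr 1
      simp at h ⊢
      omega

lemma subword_snoc (w : ℕ → α) {a b : ℕ} (h : a ≤ b + 1) :
    Subword w a (b+1) = Subword w a b ++ [w (b+1)] := by
  rw [subword_append w h (Nat.le_succ b)]
  congr 1
  apply List.ext_getElem
  · simp
  · intro n h h'
    simp only [List.length_cons, List.length_nil] at h'
    have : n = 0 := by omega
    subst this
    simp [subword_getElem]

lemma subword_infix (w : ℕ → α) {a b a' b' : ℕ} (h0 : 1 ≤ a) (h1 : a' ≤ a)
    (h2 : a ≤ b + 1) (h3 : b ≤ b') :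
    Subword w a b <:+: Subword w a' b' := by
  refine ⟨Subword w a' (a-1), Subword w (b+1) b', ?_⟩
  rw [List.append_assoc, ← subword_append w (by omega) h3]
  have e := subword_append w (a := a') (b := a-1) (c := b') (by omega) (by omega)
  rw [show a - 1 + 1 = a from by omega] at e
  rw [← e]

lemma subword_drop (w : ℕ → α) (a b n : ℕ) :
    (Subword w a b).drop n = Subword w (a+n) b := by
  apply List.ext_getElem
  · simp; omega
  · intro m h h'
    rw [List.getElem_drop, subword_getElem, subword_getElem]
    congr 1; omega

lemma subword_take (w : ℕ → α) {a b : ℕ} (n : ℕ) (h0 : 1 ≤ a) (hn : n ≤ b + 1 - a) :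
    (Subword w a b).take n = Subword w a (a + n - 1) := by
  apply List.ext_getElem
  · simp; omega
  · intro m h h'
    rw [List.getElem_take, subword_getElem, subword_getElem]

end Lemmas
section PLLemmas
variable {α : Type*}

lemma join_singletons (v : List α) : (v.map (fun c => [c])).flatten = v := by
  induction v with
  | nil => simp
  | cons c t ih => simp [ih]

lemma PLset_nonempty (v : List α) :
    ∃ k, k ∈ {k | ∃ ps : List (List α), ps.flatten = v ∧ ps.length = k ∧
      ∀ p ∈ ps, p ≠ [] ∧ p.reverse = p} := by
  refine ⟨v.length, v.map (fun c => [c]), join_singletons v, by simp, ?_⟩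
  intro p hp
  simp only [List.mem_map] at hp
  obtain ⟨c, _, rfl⟩ := hp
  simp

lemma PL_le_length (v : List α) : PL v ≤ v.length := by
  apply Nat.sInf_le
  refine ⟨v.map (fun c => [c]), join_singletons v, by simp, ?_⟩
  intro p hp
  simp only [List.mem_map] at hp
  obtain ⟨c, _, rfl⟩ := hp
  simp

lemma PL_append (a b : List α) : PL (a ++ b) ≤ PL a + PL b := by
  obtain ⟨ps, hp1, hp2, hp3⟩ := Nat.sInf_mem (PLset_nonempty a)
  obtain ⟨qs, hq1, hq2, hq3⟩ := Nat.sInf_mem (PLset_nonempty b)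
  apply Nat.sInf_le
  refine ⟨ps ++ qs, by simp [hp1, hq1], by simp [hp2, hq2, PL], ?_⟩
  intro p hp
  rcases List.mem_append.1 hp with h | h
  · exact hp3 p h
  · exact hq3 p h

lemma PL_le_maxPL {t v : List α} (h : t <:+: v) : PL t ≤ maxPL v := by
  apply le_csSup
  · refine ⟨v.length, ?_⟩
    rintro n ⟨t', ht', rfl⟩
    exact le_trans (PL_le_length t') ht'.length_le
  · exact ⟨t, h, rfl⟩

end PLLemmas
section PowLemmas
variable {α : Type*}

@[simp] lemma repjoin_length (v : List α) (k : ℕ) :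
    ((List.replicate k v).flatten).length = k * v.length := by
  induction k with
  | zero => simp
  | succ n ih => simp [List.replicate_succ, ih]; ring

lemma repjoin_succ (v : List α) (k : ℕ) :
    (List.replicate (k+1) v).flatten = v ++ (List.replicate k v).flatten := by
  simp [List.replicate_succ]

lemma repjoin_succ' (v : List α) (k : ℕ) :
    (List.replicate (k+1) v).flatten = (List.replicate k v).flatten ++ v := by
  rw [List.replicate_succ']
  simp

lemma repjoin_getElem? (v : List α) (k i : ℕ) (h : i < k * v.length) :
    ((List.replicate k v).flatten)[i]? = v[i % v.length]? := by
  induction k generalizing i with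
  | zero => simp at h
  | succ n ih =>
    have hmul : (n+1) * v.length = n * v.length + v.length := by ring
    have hv : 0 < v.length := by
      rcases Nat.eq_zero_or_pos v.length with h0 | h0
      · rw [h0, Nat.mul_zero] at h; omega
      · exact h0
    rw [repjoin_succ]
    rcases lt_or_ge i v.length with hi | hi
    · rw [List.getElem?_append_left hi]
      congr 1
      exact (Nat.mod_eq_of_lt hi).symm
    · rw [List.getElem?_append_right hi, ih (i - v.length) (by omega)]
      congr 1
      conv_rhs => rw [show i = (i - v.length) + 1 * v.length from by omega]
      rw [Nat.add_mul_mod_self_right]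

lemma repjoin_add (v : List α) (a b : ℕ) :
    (List.replicate (a+b) v).flatten = (List.replicate a v).flatten ++ (List.replicate b v).flatten := by
  induction a with
  | zero => simp
  | succ m ih =>
    rw [show m + 1 + b = (m + b) + 1 from by omega, repjoin_succ, repjoin_succ, ih,
      List.append_assoc]

lemma pow_period {u t : List α} (hp : IsPowFactor u t) (m : ℕ)
    (hm : m + u.length < t.length) :
    t[m + u.length]'(by omega) = t[m]'(by omega) := by
  have key : ∀ (v : List α), v.length = u.length → ∀ k, t <:+: (List.replicate k v).flatten →
      t[m + u.length]? = t[m]? := by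
    intro v hv k hinf
    obtain ⟨s, r, hsr⟩ := hinf
    have hlen : s.length + t.length + r.length = k * v.length := by
      have := congrArg List.length hsr
      simp at this
      omega
    have get1 : ∀ (i : ℕ), i < t.length →
        ((List.replicate k v).flatten)[s.length + i]? = t[i]? := by
      intro i hi
      rw [← hsr, List.append_assoc, List.getElem?_append_right (by omega),
        show s.length + i - s.length = i from by omega, List.getElem?_append_left hi]
    rw [← get1 _ (by omega), ← get1 _ (by omega),
      repjoin_getElem? _ _ _ (by omega), repjoin_getElem? _ _ _ (by omega)]
    congr 1
    rw [show s.length + (m + u.length) = (s.length + m) + 1 * v.length from by omega]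
    rw [Nat.add_mul_mod_self_right, hv]
  have opt : t[m + u.length]? = t[m]? := by
    rcases hp with ⟨k, hk⟩ | ⟨k, hk⟩
    · exact key u rfl k hk
    · exact key u.reverse (by simp) k hk
  rw [List.getElem?_eq_getElem (by omega), List.getElem?_eq_getElem (by omega)] at opt
  exact Option.some.inj opt

lemma pow_ext {u t : List α} (hp : IsPowFactor u t) (hu : u ≠ [])
    (hl : u.length ≤ t.length) :
    IsPowFactor u (t ++ [t[t.length - u.length]'(by
      have : 0 < u.length := List.length_pos_iff.2 hu
      omega)]) := by
  have hu0 : 0 < u.length := List.length_pos_iff.2 hu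
  have key : ∀ (v : List α), v.length = u.length → ∀ k, t <:+: (List.replicate k v).flatten →
      ∃ k', (t ++ [t[t.length - u.length]'(by omega)]) <:+: (List.replicate k' v).flatten := by
    intro v hv k hinf
    obtain ⟨s, r, hsr⟩ := hinf
    refine ⟨k + 1, ?_⟩
    have hmul : (k+1) * v.length = k * v.length + v.length := by ring
    have hJ : (List.replicate (k+1) v).flatten = s ++ t ++ (r ++ v) := by
      rw [repjoin_succ', ← hsr]
      simp
    have hrv : r ++ v ≠ [] := by
      simp only [ne_eq, List.append_eq_nil_iff]
      rintro ⟨-, rfl⟩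
      exact hu0.ne' (by simpa using hv.symm)
    obtain ⟨c, rest, hcr⟩ := List.exists_cons_of_ne_nil hrv
    have hslen : s.length + t.length + r.length = k * v.length := by
      have := congrArg List.length hsr
      simp at this
      omega
    have hvu : v.length = u.length := hv
    have hc : c = t[t.length - u.length]'(by omega) := by
      have e1 : ((List.replicate (k+1) v).flatten)[s.length + t.length]? = some c := by
        rw [hJ, hcr, List.append_assoc, List.getElem?_append_right (by omega),
          show s.length + t.length - s.length = t.length from by omega,
          List.getElem?_append_right (le_refl _), Nat.sub_self]
        simp
      have e2 : ((List.replicate (k+1) v).flatten)[s.length + t.length - v.length]? =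
          t[t.length - u.length]? := by
        rw [hJ, List.append_assoc, List.getElem?_append_right (by omega),
          show s.length + t.length - v.length - s.length = t.length - v.length from by omega,
          List.getElem?_append_left (by omega), hvu]
      rw [repjoin_getElem? _ _ _ (by omega)] at e1
      rw [repjoin_getElem? _ _ _ (by omega)] at e2
      have emod : (s.length + t.length) % v.length =
          (s.length + t.length - v.length) % v.length := by
        conv_lhs => rw [show s.length + t.length =
          (s.length + t.length - v.length) + 1 * v.length from by omega]
        rw [Nat.add_mul_mod_self_right]
      rw [emod, e2, List.getElem?_eq_getElem (by omega)] at e1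
      exact (Option.some.inj e1).symm
    refine ⟨s, rest, ?_⟩
    rw [← hc]
    rw [hJ, hcr]
    simp
  rcases hp with ⟨k, hk⟩ | ⟨k, hk⟩
  · exact Or.inl (key u rfl k hk)
  · exact Or.inr (key u.reverse (by simp) k hk)

lemma pow_infix {u t t' : List α} (h : t' <:+: t) (hp : IsPowFactor u t) :
    IsPowFactor u t' := by
  rcases hp with ⟨k, hk⟩ | ⟨k, hk⟩
  · exact Or.inl ⟨k, h.trans hk⟩
  · exact Or.inr ⟨k, h.trans hk⟩

end PowLemmas
section RunLemmas
variable {α : Type*}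

lemma runs_disjoint {γ : ℕ} {w : ℕ → α} {u : List α} (hu : u ≠ [])
    {i j i' j' : ℕ} (hA : IsRun γ w u i j) (hB : IsRun γ w u i' j') (hij : i < i') :
    j < i' := by
  set L := u.length with hL
  have hL0 : 0 < L := List.length_pos_iff.2 hu
  obtain ⟨hAij, -, hAi, hApow, hAleft, hAright⟩ := hA
  obtain ⟨hBij, -, hBi, hBpow, hBleft, hBright⟩ := hB
  by_contra hcon
  push_neg at hcon   -- i' ≤ j
  rcases le_or_gt j' j with hjj | hjj
  · -- nested: B window extension left is inside A window
    exact hBleft (pow_infix (subword_infix w (by omega) (by omega) (by omega) (by omega)) hApow)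
  · -- overlap: extend A window right by one character
    have hX : IsPowFactor u (Subword w (i - L) (j + L)) := hApow
    have hS : IsPowFactor u (Subword w (j + 1 - L) (j + L + 1)) :=
      pow_infix (subword_infix w (by omega) (by omega) (by omega) (by omega)) hBpow
    -- S has period L, so w (j + L + 1) = w (j + 1)
    have hSlen : (Subword w (j + 1 - L) (j + L + 1)).length = 2 * L + 1 := by
      simp; omega
    have hper := pow_period hS L (by omega)
    rw [subword_getElem, subword_getElem] at hper
    have hcc : w (j + L + 1) = w (j + 1) := by
      rw [show j + L + 1 = j + 1 - L + (L + L) from by omega, hper,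
        show j + 1 - L + L = j + 1 from by omega]
    -- extend X by one character
    have hXlen : (Subword w (i - L) (j + L)).length = j + L + 1 - (i - L) := by simp
    have hext := pow_ext hX hu (by rw [hXlen]; omega)
    have hgl : (Subword w (i - L) (j + L))[(Subword w (i - L) (j + L)).length - u.length]'(by
        rw [hXlen]; omega) = w (j + 1) := by
      rw [subword_getElem]
      congr 1
      rw [hXlen]
      omega
    rw [hgl, ← hcc, ← subword_snoc w (by omega)] at hext
    rw [show j + L + 1 = j + 1 + L from by omega] at hext
    exact hAright (by rw [show j + u.length + 1 = j + 1 + L from by omega]; exact hext)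

end RunLemmas
section FracLemmas
variable {α : Type*}

lemma fracPow_prefix (z : List α) {e : ℚ} (n : ℕ) (he : 1 ≤ e) :
    fracPow z e <+: fracPow z (e + n) := by
  unfold fracPow
  have hfe : (1 : ℤ) ≤ ⌊e⌋ := by exact_mod_cast Int.le_floor.2 (by exact_mod_cast he)
  have h1 : ⌊e + (n : ℚ)⌋ = ⌊e⌋ + n := by
    rw [show ((n : ℚ)) = ((n : ℤ) : ℚ) from by push_cast; ring, Int.floor_add_intCast]
  have h2 : ⌊(e + (n : ℚ)) * (z.length : ℚ)⌋ = ⌊e * z.length⌋ + ((n * z.length : ℕ) : ℤ) := by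
    rw [add_mul, show ((n : ℚ)) * (z.length : ℚ) = (((n * z.length : ℕ) : ℤ) : ℚ) from by
      push_cast; ring, Int.floor_add_intCast]
  have hfl0 : (0 : ℤ) ≤ ⌊e * z.length⌋ := by
    apply Int.floor_nonneg.2
    positivity
  have h1' : ⌊e + (n : ℚ)⌋.toNat = ⌊e⌋.toNat + n := by omega
  have h2' : ⌊(e + (n : ℚ)) * (z.length : ℚ)⌋.toNat = ⌊e * z.length⌋.toNat + n * z.length := by
    omega
  rw [h1', h2']
  have harg : ⌊e * z.length⌋.toNat + n * z.length - (⌊e⌋.toNat + n) * z.length =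
      ⌊e * z.length⌋.toNat - ⌊e⌋.toNat * z.length := by
    have : (⌊e⌋.toNat + n) * z.length = ⌊e⌋.toNat * z.length + n * z.length := by ring
    omega
  rw [harg, repjoin_add, List.append_assoc]
  apply (List.prefix_append_right_inj _).2
  cases n with
  | zero => simp
  | succ m =>
    rw [repjoin_succ]
    rcases List.take_prefix (⌊e * z.length⌋.toNat - ⌊e⌋.toNat * z.length) z with ⟨t, ht⟩
    refine ⟨t ++ ((List.replicate m z).flatten ++
      List.take (⌊e * z.length⌋.toNat - ⌊e⌋.toNat * z.length) z), ?_⟩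
    rw [← List.append_assoc, ← List.append_assoc, ht, List.append_assoc]
end FracLemmas
section FactrzLemmas
variable {α : Type*} {γ : ℕ} {w : ℕ → α} {u : List α}
  {I J : ℕ → ℕ} {W Z : ℕ → List α} {D : ℕ → ℚ}

lemma kappa_zero (W Z : ℕ → List α) (E : ℕ → ℚ) : kappa W Z E 0 = 0 := by
  simp [kappa]

lemma kappa_succ (W Z : ℕ → List α) (E : ℕ → ℚ) (k : ℕ) :
    kappa W Z E (k+1) = kappa W Z E k + ((W (k+1)).length + (fracPow (Z (k+1)) (E (k+1))).length) := by
  unfold kappa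
  rw [Finset.sum_Icc_succ_top (by omega)]

lemma kappa_mono (W Z : ℕ → List α) (E : ℕ → ℚ) {a b : ℕ} (h : a ≤ b) :
    kappa W Z E a ≤ kappa W Z E b := by
  unfold kappa
  apply Finset.sum_le_sum_of_subset
  intro x hx
  simp only [Finset.mem_Icc] at hx ⊢
  omega

lemma redPrefix_length (W Z : ℕ → List α) (E : ℕ → ℚ) (k : ℕ) :
    (redPrefix W Z E k).length = kappa W Z E k := by
  induction k with
  | zero => simp [redPrefix, kappa_zero]
  | succ n ih =>
    rw [kappa_succ]
    simp [redPrefix, ih]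

variable (hu0 : u ≠ []) (hf : IsFactrz γ w u I J W Z D)
include hu0 hf

lemma J_lt_I_succ : ∀ k, J k < I (k+1) := by
  intro k
  cases k with
  | zero =>
    rw [hf.j0, show (0:ℕ)+1 = 1 from rfl]
    have := (hf.run 1 le_rfl).2.2.1
    omega
  | succ n =>
    exact runs_disjoint hu0 (hf.run (n+1) (by omega)) (hf.run (n+2) (by omega))
      (hf.mono (n+1) (by omega))

omit hu0 in
lemma I_le_J : ∀ k, 1 ≤ k → I k ≤ J k := by
  intro k hk
  exact le_of_lt (hf.run k hk).1

lemma J_strictmono : StrictMono J := by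
  apply strictMono_nat_of_lt_succ
  intro k
  calc J k < I (k+1) := J_lt_I_succ hu0 hf k
    _ ≤ J (k+1) := I_le_J hf (k+1) (by omega)

omit hu0 in
lemma I_lt_of_lt : ∀ a b, 1 ≤ a → a < b → I a < I b := by
  intro a b ha hab
  induction b with
  | zero => omega
  | succ n ih =>
    rcases Nat.lt_or_ge a n with h | h
    · exact lt_trans (ih h) (hf.mono n (by omega))
    · have : a = n := by omega
      subst this
      exact hf.mono a ha

lemma kappa_D_eq_J : ∀ k, kappa W Z D k = J k := by
  intro k
  induction k with
  | zero => rw [kappa_zero, hf.j0]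
  | succ n ih =>
    rw [kappa_succ, ih]
    have h1 : J n < I (n+1) := J_lt_I_succ hu0 hf n
    have h2 : I (n+1) ≤ J (n+1) := I_le_J hf (n+1) (by omega)
    have hW : (W (n+1)).length = I (n+1) - 1 - J n := by
      rw [hf.wdef (n+1) (by omega)]
      simp only [Nat.add_sub_cancel, subword_length]
      omega
    have hZ : (fracPow (Z (n+1)) (D (n+1))).length = J (n+1) + 1 - I (n+1) := by
      rw [← hf.zd (n+1) (by omega)]
      simp
    omega

lemma blockD_eq : ∀ k, Subword w (J k + 1) (J (k+1)) =
    W (k+1) ++ fracPow (Z (k+1)) (D (k+1)) := by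
  intro k
  have h1 : J k < I (k+1) := J_lt_I_succ hu0 hf k
  have h2 : I (k+1) ≤ J (k+1) := I_le_J hf (k+1) (by omega)
  rw [← hf.zd (k+1) (by omega)]
  have hW : W (k+1) = Subword w (J k + 1) (I (k+1) - 1) := by
    have := hf.wdef (k+1) (by omega)
    simpa using this
  rw [hW]
  have e := subword_append w (a := J k + 1) (b := I (k+1) - 1) (c := J (k+1))
    (by omega) (by omega)
  rw [show I (k+1) - 1 + 1 = I (k+1) from by omega] at e
  exact e

end FactrzLemmas
section SliceLemmas
variable {α : Type*} {W Z : ℕ → List α} {E : ℕ → ℚ} {xb : ℕ → α}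

lemma redPrefix_getElem? (hred : IsReduce W Z E xb) (K m : ℕ)
    (hm : m < (redPrefix W Z E K).length) :
    (redPrefix W Z E K)[m]? = some (xb (1+m)) := by
  conv_lhs => rw [hred K]
  rw [List.getElem?_map]
  rw [List.getElem?_range (by simpa using hm)]
  rfl

lemma subword_x_slice (hred : IsReduce W Z E xb) {a b K : ℕ} (ha : 1 ≤ a)
    (hb : b ≤ kappa W Z E K) :
    Subword xb a b = ((redPrefix W Z E K).drop (a-1)).take (b+1-a) := by
  have hlen : (redPrefix W Z E K).length = kappa W Z E K := redPrefix_length W Z E K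
  apply List.ext_getElem
  · simp [hlen]; omega
  · intro n h h'
    rw [List.getElem_take, List.getElem_drop, subword_getElem]
    have h2 : a - 1 + n < (redPrefix W Z E K).length := by
      simp only [List.length_take, List.length_drop] at h'
      omega
    have := redPrefix_getElem? hred K (a-1+n) h2
    rw [List.getElem?_eq_getElem h2] at this
    rw [Option.some.inj this]
    congr 1
    omega

lemma piece_mid (hred : IsReduce W Z E xb) (k : ℕ) :
    Subword xb (kappa W Z E k + 1) (kappa W Z E (k+1)) =
      W (k+1) ++ fracPow (Z (k+1)) (E (k+1)) := by
  rw [subword_x_slice hred (K := k+1) (by omega) le_rfl]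
  show (((redPrefix W Z E k ++ W (k+1) ++ fracPow (Z (k+1)) (E (k+1))).drop
    (kappa W Z E k + 1 - 1)).take _) = _
  rw [List.append_assoc, Nat.add_sub_cancel, ← redPrefix_length W Z E k, List.drop_left]
  apply List.take_of_length_le
  rw [redPrefix_length W Z E k, kappa_succ]
  simp

lemma piece_first (hred : IsReduce W Z E xb) (k f : ℕ) (hf : 1 ≤ f)
    (hf2 : kappa W Z E k + f ≤ kappa W Z E (k+1)) :
    Subword xb (kappa W Z E k + f) (kappa W Z E (k+1)) =
      (W (k+1) ++ fracPow (Z (k+1)) (E (k+1))).drop (f-1) := by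
  rw [subword_x_slice hred (K := k+1) (by omega) le_rfl]
  show (((redPrefix W Z E k ++ W (k+1) ++ fracPow (Z (k+1)) (E (k+1))).drop
    (kappa W Z E k + f - 1)).take _) = _
  rw [List.append_assoc, List.drop_append, redPrefix_length W Z E k,
    List.drop_of_length_le (by rw [redPrefix_length]; omega),
    show kappa W Z E k + f - 1 - kappa W Z E k = f - 1 from by omega, List.nil_append]
  apply List.take_of_length_le
  rw [List.length_drop]
  have := kappa_succ W Z E k
  simp
  omega

lemma piece_last (hred : IsReduce W Z E xb) (k f : ℕ)
    (hf2 : kappa W Z E k + f ≤ kappa W Z E (k+1)) :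
    Subword xb (kappa W Z E k + 1) (kappa W Z E k + f) =
      (W (k+1) ++ fracPow (Z (k+1)) (E (k+1))).take f := by
  rw [subword_x_slice hred (K := k+1) (by omega) (by omega)]
  show (((redPrefix W Z E k ++ W (k+1) ++ fracPow (Z (k+1)) (E (k+1))).drop
    (kappa W Z E k + 1 - 1)).take _) = _
  rw [List.append_assoc, Nat.add_sub_cancel, ← redPrefix_length W Z E k, List.drop_left]
  congr 1
  omega

end SliceLemmas
section MoreLemmas
variable {α : Type*}

lemma prefix_drop {l1 l2 : List α} (h : l1 <+: l2) (n : ℕ) : l1.drop n <+: l2.drop n := by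
  obtain ⟨t, rfl⟩ := h
  rw [List.drop_append]
  exact ⟨List.drop (n - l1.length) t, rfl⟩

variable {γ : ℕ} {w : ℕ → α} {u : List α}
  {I J : ℕ → ℕ} {W Z : ℕ → List α} {D : ℕ → ℚ}
variable (hf : IsFactrz γ w u I J W Z D)
include hf

lemma I_mono : ∀ a b, 1 ≤ a → a ≤ b → I a ≤ I b := by
  intro a b ha hab
  rcases eq_or_lt_of_le hab with rfl | h
  · exact le_rfl
  · exact le_of_lt (I_lt_of_lt hf a b ha h)

lemma W_length (hu0 : u ≠ []) : ∀ k, (W (k+1)).length = I (k+1) - 1 - J k := by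
  intro k
  have h1 : J k < I (k+1) := J_lt_I_succ hu0 hf k
  rw [hf.wdef (k+1) (by omega)]
  simp only [Nat.add_sub_cancel, subword_length]
  omega

end MoreLemmas
/-- palindromic length bound for images of factors with at most `g` runs. -/
theorem reduced_factor_PL_bound {α : Type*} (γ h : ℕ) (hγ : 3 ≤ γ) (hh : γ ≤ h)
    (w : ℕ → α) (u : List α) (hw : ¬ UltimatelyPeriodic w) (hu : InPi γ w u)
    (φ : ℚ → ℚ) (hφ : InPhi γ h φ)
    (I J : ℕ → ℕ) (W Z : ℕ → List α) (D : ℕ → ℚ)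
    (hf : IsFactrz γ w u I J W Z D)
    (xb : ℕ → α) (hred : IsReduce W Z (fun k => φ (D k)) xb)
    (m1 m2 : ℕ) (hle : m1 ≤ m2)
    (hd1 : RpoDom γ w u m1) (hd2 : RpoDom γ w u m2)
    (g : ℕ) (hg : RunCountLe γ w u m1 m2 g)
    (mb1 mb2 : ℕ)
    (hr1 : RpoRel W Z D (fun k => φ (D k)) m1 mb1)
    (hr2 : RpoRel W Z D (fun k => φ (D k)) m2 mb2) :
    PL (Subword xb mb1 mb2) ≤ (g + 1) * maxPL (Subword w m1 m2) := by
  classical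
  have hu0 : u ≠ [] := hu.1.1
  set E : ℕ → ℚ := fun k => φ (D k) with hE
  obtain ⟨j1, hj1a, hj1b, hmb1⟩ := hr1
  obtain ⟨j2, hj2a, hj2b, hmb2⟩ := hr2
  have hKJ : ∀ k, kappa W Z D k = J k := kappa_D_eq_J hu0 hf
  rw [hKJ] at hj1a hj1b hj2a hj2b hmb1 hmb2
  have hJlt : ∀ k, J k < I (k+1) := J_lt_I_succ hu0 hf
  have hIJ : ∀ k, 1 ≤ k → I k ≤ J k := I_le_J hf
  have hJm : StrictMono J := J_strictmono hu0 hf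
  have hWlen : ∀ k, (W (k+1)).length = I (k+1) - 1 - J k := W_length hf hu0
  have hm1I : m1 < I (j1+1) := by
    by_contra hcon
    push_neg at hcon
    exact hd1.2 (I (j1+1)) (J (j1+1)) (hf.run (j1+1) (by omega)) ⟨hcon, hj1b⟩
  have hm2I : m2 < I (j2+1) := by
    by_contra hcon
    push_neg at hcon
    exact hd2.2 (I (j2+1)) (J (j2+1)) (hf.run (j2+1) (by omega)) ⟨hcon, hj2b⟩
  have hj12 : j1 ≤ j2 := by
    by_contra hcon
    push_neg at hcon
    have : J (j2+1) ≤ J j1 := hJm.monotone (by omega)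
    omega
  have hf1 : 1 ≤ m1 - J j1 := by omega
  have hf1W : m1 - J j1 ≤ (W (j1+1)).length := by rw [hWlen]; omega
  have hf2W : m2 - J j2 ≤ (W (j2+1)).length := by rw [hWlen]; omega
  have hblockD : ∀ k, Subword w (J k + 1) (J (k+1)) =
      W (k+1) ++ fracPow (Z (k+1)) (D (k+1)) := blockD_eq hu0 hf
  have hEpre : ∀ k, 1 ≤ k →
      (W k ++ fracPow (Z k) (E k)) <+: (W k ++ fracPow (Z k) (D k)) := by
    intro k hk
    obtain ⟨hge, hlt, n, hn⟩ := hφ (D k) (hf.dge k hk)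
    have h1 : 1 ≤ φ (D k) := by
      have h3 : (3:ℚ) ≤ (γ:ℚ) := by exact_mod_cast hγ
      linarith
    have hDk : D k = φ (D k) + n := by linarith
    apply (List.prefix_append_right_inj (W k)).2
    have := fracPow_prefix (Z k) n h1
    rw [← hDk] at this
    exact this
  set M := maxPL (Subword w m1 m2) with hM
  have hfac : ∀ (t : List α), t <:+: Subword w m1 m2 → PL t ≤ M := fun t ht => PL_le_maxPL ht
  have hkE : ∀ k, kappa W Z E (k+1) = kappa W Z E k +
      ((W (k+1)).length + (fracPow (Z (k+1)) (E (k+1))).length) := kappa_succ W Z E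
  rcases eq_or_lt_of_le hj12 with rfl | hj12'
  · -- single block case
    have hb2 : kappa W Z E j1 + (m2 - J j1) ≤ kappa W Z E (j1+1) := by
      rw [hkE]
      omega
    rw [hmb1, hmb2, subword_x_slice hred (K := j1+1) (by omega) hb2]
    have hred1 : redPrefix W Z E (j1+1) =
        redPrefix W Z E j1 ++ (W (j1+1) ++ fracPow (Z (j1+1)) (E (j1+1))) := by
      show redPrefix W Z E j1 ++ W (j1+1) ++ fracPow (Z (j1+1)) (E (j1+1)) = _
      rw [List.append_assoc]
    rw [hred1, List.drop_append, redPrefix_length W Z E j1,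
      List.drop_of_length_le (by rw [redPrefix_length]; omega),
      show kappa W Z E j1 + (m1 - J j1) - 1 - kappa W Z E j1 = m1 - J j1 - 1 from by omega,
      List.nil_append]
    rw [List.drop_append,
      List.take_append_of_le_length (by rw [List.length_drop]; omega)]
    have hWsub : W (j1+1) = Subword w (J j1 + 1) (I (j1+1) - 1) := by
      have := hf.wdef (j1+1) (by omega)
      simpa using this
    rw [hWsub, subword_drop,
      show J j1 + 1 + (m1 - J j1 - 1) = m1 from by omega,
      subword_take w _ (by omega) (by simp; omega),
      show m1 + (kappa W Z E j1 + (m2 - J j1) + 1 - (kappa W Z E j1 + (m1 - J j1))) - 1 = m2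
        from by omega]
    calc PL (Subword w m1 m2) ≤ M := hfac _ (List.infix_refl _)
      _ ≤ (g+1) * M := Nat.le_mul_of_pos_left M (by omega)
  · -- several blocks
    have hcount : j2 - j1 ≤ g := by
      have hmem : ∀ p ∈ (Finset.Icc (j1+1) j2).image (fun k => (I k, J k)),
          IsRun γ w u p.1 p.2 ∧ m1 ≤ p.1 ∧ p.2 ≤ m2 := by
        intro p hp
        simp only [Finset.mem_image, Finset.mem_Icc] at hp
        obtain ⟨k, ⟨hk1, hk2⟩, rfl⟩ := hp
        refine ⟨hf.run k (by omega), ?_, ?_⟩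
        · have : I (j1+1) ≤ I k := I_mono hf (j1+1) k (by omega) (by omega)
          omega
        · have : J k ≤ J j2 := hJm.monotone hk2
          omega
      have hinj : Set.InjOn (fun k => (I k, J k)) ↑(Finset.Icc (j1+1) j2) := by
        intro a ha b hb hab
        simp only [Finset.coe_Icc, Set.mem_Icc] at ha hb
        simp only [Prod.mk.injEq] at hab
        by_contra hne
        rcases Nat.lt_or_ge a b with hlt | hge
        · exact absurd hab.1 (I_lt_of_lt hf a b (by omega) hlt).ne
        · exact absurd hab.1.symm (I_lt_of_lt hf b a (by omega) (by omega)).ne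
      have := hg _ hmem
      rw [Finset.card_image_of_injOn hinj, Nat.card_Icc] at this
      omega
    have hmb1' : mb1 ≤ kappa W Z E (j1+1) := by
      rw [hmb1, hkE]
      omega
    have hmain : ∀ k, j1 + 1 ≤ k → k ≤ j2 →
        PL (Subword xb mb1 (kappa W Z E k)) ≤ (k - j1) * M := by
      intro k hk1
      induction k, hk1 using Nat.le_induction with
      | base =>
        intro hkk
        rw [hmb1, piece_first hred j1 (m1 - J j1) hf1 (by rw [hkE]; omega)]
        have hpre : (W (j1+1) ++ fracPow (Z (j1+1)) (E (j1+1))).drop (m1 - J j1 - 1) <+: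
            (W (j1+1) ++ fracPow (Z (j1+1)) (D (j1+1))).drop (m1 - J j1 - 1) :=
          prefix_drop (hEpre (j1+1) (by omega)) _
        have heq : (W (j1+1) ++ fracPow (Z (j1+1)) (D (j1+1))).drop (m1 - J j1 - 1) =
            Subword w m1 (J (j1+1)) := by
          rw [← hblockD j1, subword_drop, show J j1 + 1 + (m1 - J j1 - 1) = m1 from by omega]
        rw [heq] at hpre
        have hinf : Subword w m1 (J (j1+1)) <:+: Subword w m1 m2 := by
          apply subword_infix w (by omega) le_rfl (by omega)
          have : J (j1+1) ≤ J j2 := hJm.monotone (by omega)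
          omega
        have := hfac _ (hpre.isInfix.trans hinf)
        rw [show j1 + 1 - j1 = 1 from by omega, one_mul]
        exact this
      | succ n hn ih =>
        intro hkk
        have ih' := ih (by omega)
        have hsplit : Subword xb mb1 (kappa W Z E (n+1)) =
            Subword xb mb1 (kappa W Z E n) ++
              Subword xb (kappa W Z E n + 1) (kappa W Z E (n+1)) := by
          apply subword_append xb ?_ (by rw [hkE]; omega)
          have : kappa W Z E (j1+1) ≤ kappa W Z E n := kappa_mono W Z E hn
          omega
        rw [hsplit]
        have hmid : PL (Subword xb (kappa W Z E n + 1) (kappa W Z E (n+1))) ≤ M := by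
          rw [piece_mid hred n]
          have hpre := hEpre (n+1) (by omega)
          rw [← hblockD n] at hpre
          have hinf : Subword w (J n + 1) (J (n+1)) <:+: Subword w m1 m2 := by
            have h1 : J (n+1) ≤ J j2 := hJm.monotone (by omega)
            have h2 : J (j1+1) ≤ J n := hJm.monotone (by omega)
            have h3 : J n ≤ J (n+1) := hJm.monotone (by omega)
            exact subword_infix w (by omega) (by omega) (by omega) (by omega)
          exact hfac _ (hpre.isInfix.trans hinf)
        calc PL (Subword xb mb1 (kappa W Z E n) ++
              Subword xb (kappa W Z E n + 1) (kappa W Z E (n+1)))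
            ≤ PL (Subword xb mb1 (kappa W Z E n)) +
              PL (Subword xb (kappa W Z E n + 1) (kappa W Z E (n+1))) := PL_append _ _
          _ ≤ (n - j1) * M + M := by omega
          _ = (n + 1 - j1) * M := by
              rw [show n + 1 - j1 = (n - j1) + 1 from by omega]
              ring
    have hlastpiece : PL (Subword xb (kappa W Z E j2 + 1) mb2) ≤ M := by
      rw [hmb2, piece_last hred j2 (m2 - J j2) (by rw [hkE]; omega)]
      rw [List.take_append_of_le_length hf2W]
      have hWsub : W (j2+1) = Subword w (J j2 + 1) (I (j2+1) - 1) := by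
        have := hf.wdef (j2+1) (by omega)
        simpa using this
      rw [hWsub, subword_take w _ (by omega) (by simp; omega),
        show J j2 + 1 + (m2 - J j2) - 1 = m2 from by omega]
      apply hfac
      apply subword_infix w (by omega) ?_ (by omega) le_rfl
      have : J (j1+1) ≤ J j2 := hJm.monotone (by omega)
      omega
    have hsplit2 : Subword xb mb1 mb2 =
        Subword xb mb1 (kappa W Z E j2) ++ Subword xb (kappa W Z E j2 + 1) mb2 := by
      apply subword_append xb ?_ (by rw [hmb2]; omega)
      have : kappa W Z E (j1+1) ≤ kappa W Z E j2 := kappa_mono W Z E (by omega)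
      omega
    rw [hsplit2]
    calc PL (Subword xb mb1 (kappa W Z E j2) ++ Subword xb (kappa W Z E j2 + 1) mb2)
        ≤ PL (Subword xb mb1 (kappa W Z E j2)) +
          PL (Subword xb (kappa W Z E j2 + 1) mb2) := PL_append _ _
      _ ≤ (j2 - j1) * M + M := by
          have := hmain j2 (by omega) le_rfl
          omega
      _ = (j2 - j1 + 1) * M := by ring
      _ ≤ (g + 1) * M := Nat.mul_le_mul_right M (by omega)
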